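/- (Jaynes non-uniqueness, infinite-dimensional version) Two mixed states {(ψ_j, λ_j)} and {(ψ'_j, λ'_j)} in a separable Hilbert space H generate the same density operator ρ̂ if and only if there exists a partial isometry U of H with A = A' U, where A φ_j = λ_j^{1/2} ψ_j and A' φ_j = (λ'_j)^{1/2} ψ'_j relative to a fixed orthonormal basis (φ_j). -/

import Mathlib

open MeasureTheory InnerProductSpace

/-- `U` is a partial isometry: it is isometric on the orthogonal complement of its kernel. -/
def IsPartialIsometry {H : Type*} [NormedAddCommGroup H] [InnerProductSpace ℂ H]
    (U : H →L[ℂ] H) : Prop :=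
  ∀ x ∈ (LinearMap.ker (U : H →ₗ[ℂ] H))ᗮ, ‖U x‖ = ‖x‖

section JaynesAux

open ContinuousLinearMap

set_option linter.unusedSectionVars false
set_option maxHeartbeats 1000000

variable {H : Type*} [NormedAddCommGroup H] [InnerProductSpace ℂ H] [CompleteSpace H]

local notation "⟪" x ", " y "⟫" => (inner ℂ x y : ℂ)

private lemma re_inner_self (x : H) : (⟪x, x⟫).re = ‖x‖ ^ 2 := by
  have := inner_self_eq_norm_sq (𝕜 := ℂ) (E := H) x
  simpa using this

private lemma parseval (b : HilbertBasis ℕ ℂ H) (x : H) :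
    HasSum (fun j => ‖⟪b j, x⟫‖ ^ 2) (‖x‖ ^ 2) := by
  have h0 : HasSum (fun i => ⟪x, b i⟫ * ⟪b i, x⟫) ⟪x, x⟫ := b.hasSum_inner_mul_inner x x
  have h1 : HasSum (fun i => ((‖⟪b i, x⟫‖ ^ 2 : ℝ) : ℂ)) ⟪x, x⟫ := by
    refine HasSum.congr_fun h0 fun i => ?_
    have hc : ⟪b i, x⟫ = (starRingEnd ℂ) ⟪x, b i⟫ := (inner_conj_symm (b i) x).symm
    rw [hc, RCLike.norm_conj, RCLike.mul_conj]
    push_cast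
    rfl
  have h2 := h1.mapL Complex.reCLM
  simp only [Complex.reCLM_apply, Complex.ofReal_re] at h2
  rwa [re_inner_self x] at h2

private lemma trace_adjoint (b : HilbertBasis ℕ ℂ H) (A : H →L[ℂ] H) (c : ℕ → ℝ)
    (hAb : ∀ k, ‖A (b k)‖ ^ 2 = c k) (hcs : Summable c) (hct : ∑' k, c k = 1) :
    Summable (fun j => ‖adjoint A (b j)‖ ^ 2) ∧ ∑' j, ‖adjoint A (b j)‖ ^ 2 = 1 := by
  set G : ℕ × ℕ → ℝ := fun p => ‖⟪b p.2, A (b p.1)⟫‖ ^ 2 with hGdef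
  have hG0 : 0 ≤ G := fun p => by positivity
  have hrow : ∀ k, HasSum (fun j => G (k, j)) (c k) := fun k => hAb k ▸ parseval b (A (b k))
  have hG : Summable G := by
    refine (summable_prod_of_nonneg hG0).mpr ⟨fun k => (hrow k).summable, ?_⟩
    have : (fun k => ∑' j, G (k, j)) = c := funext fun k => (hrow k).tsum_eq
    rw [this]; exact hcs
  have hGsum : ∑' p, G p = 1 := by
    rw [hG.tsum_prod' fun k => (hrow k).summable]
    calc ∑' k, ∑' j, G (k, j) = ∑' k, c k := by
          exact tsum_congr fun k => (hrow k).tsum_eq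
      _ = 1 := hct
  have hcol : ∀ j, HasSum (fun k => G (k, j)) (‖adjoint A (b j)‖ ^ 2) := by
    intro j
    have h := parseval b (adjoint A (b j))
    refine h.congr_fun fun k => ?_
    have h1 : ⟪b k, adjoint A (b j)⟫ = ⟪A (b k), b j⟫ := adjoint_inner_right A (b k) (b j)
    rw [h1, ← inner_conj_symm, RCLike.norm_conj]
  have hswap : Summable (fun p : ℕ × ℕ => G (p.2, p.1)) := by
    have := hG.prod_symm
    exact this
  have hsum2 : Summable (fun j => ‖adjoint A (b j)‖ ^ 2) := by
    have h := (summable_prod_of_nonneg (f := fun p : ℕ × ℕ => G (p.2, p.1))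
      (fun p => hG0 p.swap)).mp hswap
    have : (fun j => ∑' k, G (k, j)) = fun j => ‖adjoint A (b j)‖ ^ 2 :=
      funext fun j => (hcol j).tsum_eq
    simpa [this] using h.2
  refine ⟨hsum2, ?_⟩
  have h1 : ∑' p : ℕ × ℕ, G (p.2, p.1) = ∑' p, G p := by
    have := (Equiv.prodComm ℕ ℕ).tsum_eq G
    simpa [Equiv.prodComm, Prod.swap] using this
  have h2 : ∑' p : ℕ × ℕ, G (p.2, p.1) = ∑' j, ∑' k, G (k, j) := by
    exact hswap.tsum_prod' fun j => (hcol j).summable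
  have h3 : ∑' j, ∑' k, G (k, j) = ∑' j, ‖adjoint A (b j)‖ ^ 2 :=
    tsum_congr fun j => (hcol j).tsum_eq
  rw [← h3, ← h2, h1, hGsum]

private lemma posop {T : H →L[ℂ] H} (hsym : ∀ x y : H, ⟪T x, y⟫ = ⟪x, T y⟫)
    (hpos : ∀ x : H, 0 ≤ (⟪T x, x⟫).re) {x : H} (hx : (⟪T x, x⟫).re = 0) : T x = 0 := by
  have hreal : ∀ y : H, ⟪T y, y⟫ = ((⟪T y, y⟫).re : ℂ) := by
    intro y
    have h1 : (starRingEnd ℂ) ⟪T y, y⟫ = ⟪T y, y⟫ := by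
      rw [inner_conj_symm, hsym]
    exact (Complex.conj_eq_iff_re.mp h1).symm
  have hx0 : ⟪T x, x⟫ = 0 := by rw [hreal x, hx]; simp
  set q := ‖T x‖ ^ 2 with hq
  set r := (⟪T (T x), T x⟫).re with hr
  have hr0 : 0 ≤ r := hpos (T x)
  have key : ∀ t : ℝ, 0 ≤ 2 * t * q + r := by
    intro t
    have h := hpos ((t : ℂ) • x + T x)
    have hTw : T ((t : ℂ) • x + T x) = (t : ℂ) • T x + T (T x) := by
      simp [map_add, _root_.map_smul]
    rw [hTw] at h
    have hexp : ⟪(t : ℂ) • T x + T (T x), (t : ℂ) • x + T x⟫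
        = (t : ℂ) * (t : ℂ) * ⟪T x, x⟫ + (t : ℂ) * ⟪T x, T x⟫
          + (t : ℂ) * ⟪T (T x), x⟫ + ⟪T (T x), T x⟫ := by
      simp only [inner_add_left, inner_add_right, inner_smul_left, inner_smul_right,
        Complex.conj_ofReal]
      ring
    have hTTx : ⟪T (T x), x⟫ = ⟪T x, T x⟫ := by rw [hsym]
    rw [hexp, hx0, hTTx] at h
    have hnorm : ⟪T x, T x⟫ = (q : ℂ) := by
      rw [inner_self_eq_norm_sq_to_K, hq]; norm_cast
    have hrr : ⟪T (T x), T x⟫ = (r : ℂ) := hreal (T x)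
    rw [hnorm, hrr] at h
    have hcast : (t : ℂ) * (t : ℂ) * 0 + (t : ℂ) * (q : ℂ) + (t : ℂ) * (q : ℂ) + (r : ℂ)
        = ((2 * t * q + r : ℝ) : ℂ) := by push_cast; ring
    rw [hcast] at h
    simpa using h
  by_contra hne
  have hq0 : 0 < q := by
    have : T x ≠ 0 := hne
    have hn : 0 < ‖T x‖ := norm_pos_iff.mpr this
    positivity
  have := key (-(r + 1) / (2 * q))
  have h2 : 2 * (-(r + 1) / (2 * q)) * q = -(r + 1) := by field_simp
  rw [h2] at this
  linarith

private lemma ext_of_basis (b : HilbertBasis ℕ ℂ H) {S T : H →L[ℂ] H}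
    (h : ∀ j, S (b j) = T (b j)) : S = T := by
  ext x
  have h1 := (b.hasSum_repr x).mapL S
  have h2 := (b.hasSum_repr x).mapL T
  have hfun : (fun j => S (b.repr x j • b j)) = fun j => T (b.repr x j • b j) := by
    funext j; simp only [_root_.map_smul, h j]
  rw [hfun] at h1
  exact h1.unique h2

private lemma rho_apply (b : HilbertBasis ℕ ℂ H) (lam : ℕ → ℝ) (ψ : ℕ → H)
    (hlam : ∀ j, 0 ≤ lam j) (A : H →L[ℂ] H)
    (hA : ∀ j, A (b j) = (Real.sqrt (lam j) : ℂ) • ψ j) (x : H) :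
    A (adjoint A x) = ∑' j, (lam j : ℂ) • ((⟪ψ j, x⟫) • ψ j) := by
  have h := (b.hasSum_repr (adjoint A x)).mapL A
  have hfun : (fun j => A (b.repr (adjoint A x) j • b j))
      = fun j => (lam j : ℂ) • ((⟪ψ j, x⟫) • ψ j) := by
    funext j
    rw [_root_.map_smul, b.repr_apply_apply, adjoint_inner_right, hA j]
    rw [inner_smul_left, Complex.conj_ofReal, smul_smul, smul_smul]
    rw [mul_right_comm, ← Complex.ofReal_mul, Real.mul_self_sqrt (hlam j)]
  rw [hfun] at h
  exact h.tsum_eq.symm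

private lemma inner_map_eq {f g : H →L[ℂ] H} (h : ∀ x, ‖f x‖ = ‖g x‖) (x y : H) :
    ⟪f x, f y⟫ = ⟪g x, g y⟫ := by
  rw [inner_eq_sum_norm_sq_div_four, inner_eq_sum_norm_sq_div_four]
  simp only [← map_add, ← _root_.map_smul, ← map_sub, h]

private lemma exists_pi (f g : H →L[ℂ] H) (hnorm : ∀ x, ‖f x‖ = ‖g x‖) :
    ∃ U : H →L[ℂ] H, IsPartialIsometry U ∧ ∀ x, adjoint U (g x) = f x := by
  classical
  set gl := (g : H →ₗ[ℂ] H) with hgl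
  set fl := (f : H →ₗ[ℂ] H) with hfl
  have hker : LinearMap.ker gl ≤ LinearMap.ker fl := by
    intro x hx
    have hx0 : g x = 0 := hx
    have : ‖f x‖ = 0 := by rw [hnorm x, hx0, norm_zero]
    exact norm_eq_zero.mp this
  set S := LinearMap.range gl with hS
  set V0 : S →ₗ[ℂ] H :=
    ((LinearMap.ker gl).liftQ fl hker).comp (gl.quotKerEquivRange.symm : S →ₗ[ℂ] _) with hV0def
  have hV0 : ∀ x : H, V0 ⟨gl x, LinearMap.mem_range_self gl x⟩ = f x := by
    intro x
    have h1 : gl.quotKerEquivRange.symm ⟨gl x, LinearMap.mem_range_self gl x⟩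
        = Submodule.Quotient.mk x := by
      exact LinearMap.quotKerEquivRange_symm_apply_image gl x (LinearMap.mem_range_self gl x)
    simp only [hV0def, LinearMap.comp_apply, LinearEquiv.coe_coe, h1, Submodule.liftQ_apply]
    rfl
  have hV0norm : ∀ s : S, ‖V0 s‖ = ‖s‖ := by
    rintro ⟨-, x, rfl⟩
    have h1 : ‖V0 ⟨gl x, LinearMap.mem_range_self gl x⟩‖ = ‖f x‖ := congrArg norm (hV0 x)
    calc ‖V0 ⟨gl x, _⟩‖ = ‖f x‖ := h1
      _ = ‖g x‖ := hnorm x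
      _ = ‖(⟨gl x, LinearMap.mem_range_self gl x⟩ : S)‖ := rfl
  set Viso : S →ₗᵢ[ℂ] H := ⟨V0, hV0norm⟩ with hViso
  set V1 : S →L[ℂ] H := Viso.toContinuousLinearMap with hV1
  set N := S.topologicalClosure with hN
  set einc : S →ₗᵢ[ℂ] N := ⟨Submodule.inclusion S.le_topologicalClosure, fun s => rfl⟩ with heinc
  set e : S →L[ℂ] N := einc.toContinuousLinearMap with he
  have hecoe : ∀ s : S, ((e s : N) : H) = (s : H) := fun s => rfl
  have hdense : DenseRange e := by
    intro n
    have himg : Subtype.val '' (Set.range e) = (S : Set H) := by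
      ext y
      constructor
      · rintro ⟨-, ⟨s, rfl⟩, rfl⟩
        exact s.2
      · intro hy
        exact ⟨e ⟨y, hy⟩, ⟨⟨y, hy⟩, rfl⟩, rfl⟩
    refine closure_subtype.mpr ?_
    rw [himg]
    have := n.2
    rwa [← Submodule.topologicalClosure_coe]
  have h_e : IsUniformInducing e := einc.isometry.isUniformInducing
  haveI : CompleteSpace N := Submodule.topologicalClosure.completeSpace S
  set V2 : N →L[ℂ] H := V1.extend e with hV2def
  have hV2e : ∀ s : S, V2 (e s) = V1 s := fun s =>
    ContinuousLinearMap.extend_eq V1 hdense h_e s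
  set P : H →L[ℂ] N := Submodule.orthogonalProjectionOnto N with hP
  set V : H →L[ℂ] H := V2 ∘L (P : H →L[ℂ] N) with hVdef
  have hPmem : ∀ n : N, P (n : H) = n := fun n => Submodule.orthogonalProjectionOnto_mem_subspace_eq_self n
  have hVg : ∀ x, V (g x) = f x := by
    intro x
    have hmem : g x ∈ N := S.le_topologicalClosure (LinearMap.mem_range_self gl x)
    have h1 : V (g x) = V2 ⟨g x, hmem⟩ := by
      show V2 (P (g x)) = _
      rw [show P (g x) = ⟨g x, hmem⟩ from hPmem ⟨g x, hmem⟩]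
    have h2 : e ⟨gl x, LinearMap.mem_range_self gl x⟩ = ⟨g x, hmem⟩ := rfl
    rw [h1, ← h2, hV2e]
    exact hV0 x
  have hV2norm : ∀ n : N, ‖V2 n‖ = ‖n‖ := by
    have hc1 : Continuous fun n : N => ‖V2 n‖ := V2.continuous.norm
    have hc2 : Continuous fun n : N => ‖n‖ := continuous_norm
    have heq : Set.EqOn (fun n : N => ‖V2 n‖) (fun n : N => ‖n‖) (Set.range e) := by
      rintro - ⟨s, rfl⟩
      show ‖V2 (e s)‖ = ‖e s‖
      rw [hV2e s]
      calc ‖V1 s‖ = ‖s‖ := hV0norm s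
        _ = ‖e s‖ := rfl
    exact fun n => congrFun (hc1.ext_on hdense hc2 heq) n
  set M := (LinearMap.range fl).topologicalClosure with hM
  have hV2mem : ∀ n : N, V2 n ∈ M := by
    have hCc : IsClosed (V2 ⁻¹' (M : Set H)) :=
      (Submodule.isClosed_topologicalClosure _).preimage V2.continuous
    have hsub : Set.range e ⊆ V2 ⁻¹' (M : Set H) := by
      rintro - ⟨s, rfl⟩
      show V2 (e s) ∈ M
      rw [hV2e]
      obtain ⟨-, x, rfl⟩ := s
      have : V1 ⟨gl x, LinearMap.mem_range_self gl x⟩ = f x := hV0 x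
      rw [this]
      exact (LinearMap.range fl).le_topologicalClosure (LinearMap.mem_range_self fl x)
    intro n
    exact closure_minimal hsub hCc (hdense n)
  have hVmem : ∀ z, V z ∈ M := fun z => hV2mem (P z)
  have hVorth : ∀ z ∈ Nᗮ, V z = 0 := by
    intro z hz
    show V2 (P z) = 0
    rw [Submodule.orthogonalProjectionOnto_apply_of_mem_orthogonal hz, map_zero]
  have hadj : ∀ x z, ⟪g x, z⟫ = ⟪f x, V z⟫ := by
    intro x z
    have claim : ∀ n : N, ⟪g x, (n : H)⟫ = ⟪f x, V2 n⟫ := by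
      have hc1 : Continuous fun n : N => ⟪g x, (n : H)⟫ :=
        continuous_const.inner continuous_subtype_val
      have hc2 : Continuous fun n : N => ⟪f x, V2 n⟫ :=
        continuous_const.inner V2.continuous
      have heq : Set.EqOn (fun n : N => ⟪g x, (n : H)⟫) (fun n : N => ⟪f x, V2 n⟫)
          (Set.range e) := by
        rintro - ⟨s, rfl⟩
        show ⟪g x, ((e s : N) : H)⟫ = ⟪f x, V2 (e s)⟫
        rw [hV2e, hecoe]
        obtain ⟨-, y, rfl⟩ := s
        have h1 : V1 ⟨gl y, LinearMap.mem_range_self gl y⟩ = f y := hV0 y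
        rw [h1]
        exact (inner_map_eq hnorm x y).symm
      exact fun n => congrFun (hc1.ext_on hdense hc2 heq) n
    have hdec : (P z : H) + (Submodule.orthogonalProjectionOnto Nᗮ z : H) = z :=
        N.starProjection_add_starProjection_orthogonal z
    calc ⟪g x, z⟫ = ⟪g x, (P z : H) + (Submodule.orthogonalProjectionOnto Nᗮ z : H)⟫ := by rw [hdec]
      _ = ⟪g x, (P z : H)⟫ + ⟪g x, (Submodule.orthogonalProjectionOnto Nᗮ z : H)⟫ := inner_add_right _ _ _
      _ = ⟪g x, (P z : H)⟫ := by
          have hz0 : ⟪g x, ((Submodule.orthogonalProjectionOnto Nᗮ z : H))⟫ = 0 :=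
            Submodule.inner_right_of_mem_orthogonal (K := N)
              (show g x ∈ N from S.le_topologicalClosure (LinearMap.mem_range_self gl x))
              (SetLike.coe_mem _)
          rw [hz0, add_zero]
      _ = ⟪f x, V2 (P z)⟫ := claim (P z)
      _ = ⟪f x, V z⟫ := rfl
  refine ⟨adjoint V, ?_, ?_⟩
  · intro w hw
    have hMperp : Mᗮ ≤ LinearMap.ker (adjoint V : H →ₗ[ℂ] H) := by
      intro u hu
      rw [LinearMap.mem_ker]
      refine ext_inner_right ℂ fun z => ?_
      rw [ContinuousLinearMap.coe_coe, adjoint_inner_left, inner_zero_left]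
      exact Submodule.inner_left_of_mem_orthogonal (hVmem z) hu
    have hwM : w ∈ M := by
      have h1 : (LinearMap.ker (adjoint V : H →ₗ[ℂ] H))ᗮ ≤ Mᗮᗮ := Submodule.orthogonal_le hMperp
      have h2 : Mᗮᗮ = M := by
        rw [Submodule.orthogonal_orthogonal_eq_closure]
        exact IsClosed.submodule_topologicalClosure_eq (Submodule.isClosed_topologicalClosure _)
      exact h2 ▸ h1 hw
    have hUf : ∀ y, adjoint V (f y) = g y := fun y =>
      ext_inner_right ℂ fun z => by rw [adjoint_inner_left]; exact (hadj y z).symm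
    have hQ : V (adjoint V w) = w := by
      have hCc : IsClosed {u : H | V (adjoint V u) = u} :=
        isClosed_eq (V.continuous.comp (adjoint V).continuous) continuous_id
      have hsub : (LinearMap.range fl : Set H) ⊆ {u | V (adjoint V u) = u} := by
        rintro - ⟨y, rfl⟩
        show V (adjoint V (fl y)) = fl y
        have : fl y = f y := rfl
        rw [this, hUf y, hVg y]
      have hwc : w ∈ closure (LinearMap.range fl : Set H) := by
        rw [← Submodule.topologicalClosure_coe]; exact hwM
      exact closure_minimal hsub hCc hwc
    have e1 : ⟪adjoint V w, adjoint V w⟫ = ⟪w, w⟫ := by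
      rw [adjoint_inner_left, hQ]
    have e3 : ‖adjoint V w‖ ^ 2 = ‖w‖ ^ 2 := by
      have h1 := inner_self_eq_norm_sq (𝕜 := ℂ) (E := H) (adjoint V w)
      have h2 := inner_self_eq_norm_sq (𝕜 := ℂ) (E := H) w
      rw [← h1, ← h2, e1]
    have := congrArg Real.sqrt e3
    rwa [Real.sqrt_sq (norm_nonneg _), Real.sqrt_sq (norm_nonneg _)] at this
  · intro x
    rw [adjoint_adjoint]
    exact hVg x

end JaynesAux

set_option maxHeartbeats 1000000 in
/-- Jaynes non-uniqueness, infinite-dimensional version: two mixed states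
generate the same density operator iff `A = A' U` for some partial isometry `U`. -/
theorem jaynes_nonuniqueness {H : Type*} [NormedAddCommGroup H]
    [InnerProductSpace ℂ H] [CompleteSpace H]
    (b : HilbertBasis ℕ ℂ H) (lam lam' : ℕ → ℝ) (ψ ψ' : ℕ → H)
    (hlam : ∀ j, 0 ≤ lam j) (hlam' : ∀ j, 0 ≤ lam' j)
    (hsum : ∑' j, lam j = 1) (hsum' : ∑' j, lam' j = 1)
    (hlsum : Summable lam) (hlsum' : Summable lam')
    (hψ : ∀ j, ‖ψ j‖ = 1) (hψ' : ∀ j, ‖ψ' j‖ = 1)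
    (A A' : H →L[ℂ] H)
    (hA : ∀ j, A (b j) = (Real.sqrt (lam j) : ℂ) • ψ j)
    (hA' : ∀ j, A' (b j) = (Real.sqrt (lam' j) : ℂ) • ψ' j) :
    (∀ x : H, (∑' j, (lam j : ℂ) • ((inner ℂ (ψ j) x : ℂ) • ψ j)) =
        ∑' j, (lam' j : ℂ) • ((inner ℂ (ψ' j) x : ℂ) • ψ' j)) ↔
      ∃ U : H →L[ℂ] H, IsPartialIsometry U ∧ A = A' ∘L U := by
  classical
  have hA2 : ∀ k, ‖A (b k)‖ ^ 2 = lam k := by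
    intro k
    rw [hA k, norm_smul, hψ k, mul_one]
    rw [Complex.norm_real, Real.norm_eq_abs, abs_of_nonneg (Real.sqrt_nonneg _),
      Real.sq_sqrt (hlam k)]
  have hA'2 : ∀ k, ‖A' (b k)‖ ^ 2 = lam' k := by
    intro k
    rw [hA' k, norm_smul, hψ' k, mul_one]
    rw [Complex.norm_real, Real.norm_eq_abs, abs_of_nonneg (Real.sqrt_nonneg _),
      Real.sq_sqrt (hlam' k)]
  constructor
  · intro hρ
    have hAA : ∀ x : H, A (ContinuousLinearMap.adjoint A x)
        = A' (ContinuousLinearMap.adjoint A' x) := by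
      intro x
      rw [rho_apply b lam ψ hlam A hA x, rho_apply b lam' ψ' hlam' A' hA' x]
      exact hρ x
    have hnorm2 : ∀ x, ‖ContinuousLinearMap.adjoint A x‖ = ‖ContinuousLinearMap.adjoint A' x‖ := by
      intro x
      have h1 : (inner ℂ (ContinuousLinearMap.adjoint A x) (ContinuousLinearMap.adjoint A x) : ℂ)
          = inner ℂ x (A (ContinuousLinearMap.adjoint A x)) :=
        ContinuousLinearMap.adjoint_inner_left A (ContinuousLinearMap.adjoint A x) x
      have h2 : (inner ℂ (ContinuousLinearMap.adjoint A' x) (ContinuousLinearMap.adjoint A' x) : ℂ)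
          = inner ℂ x (A' (ContinuousLinearMap.adjoint A' x)) :=
        ContinuousLinearMap.adjoint_inner_left A' (ContinuousLinearMap.adjoint A' x) x
      have h3 : (inner ℂ (ContinuousLinearMap.adjoint A x) (ContinuousLinearMap.adjoint A x) : ℂ)
          = inner ℂ (ContinuousLinearMap.adjoint A' x) (ContinuousLinearMap.adjoint A' x) := by
        rw [h1, h2, hAA x]
      have e3 : ‖ContinuousLinearMap.adjoint A x‖ ^ 2
          = ‖ContinuousLinearMap.adjoint A' x‖ ^ 2 := by
        rw [← re_inner_self, ← re_inner_self, h3]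
      have := congrArg Real.sqrt e3
      rwa [Real.sqrt_sq (norm_nonneg _), Real.sqrt_sq (norm_nonneg _)] at this
    obtain ⟨U, hU, hUg⟩ := exists_pi (ContinuousLinearMap.adjoint A)
      (ContinuousLinearMap.adjoint A') hnorm2
    refine ⟨U, hU, ?_⟩
    have h1 : ContinuousLinearMap.adjoint A = ContinuousLinearMap.adjoint (A' ∘L U) := by
      rw [ContinuousLinearMap.adjoint_comp]
      exact ContinuousLinearMap.ext fun x => (hUg x).symm
    have := congrArg ContinuousLinearMap.adjoint h1
    rwa [ContinuousLinearMap.adjoint_adjoint, ContinuousLinearMap.adjoint_adjoint] at this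
  · rintro ⟨U, hU, hAU⟩
    haveI : CompleteSpace (LinearMap.ker (U : H →ₗ[ℂ] H)) :=
      (ContinuousLinearMap.isClosed_ker U).completeSpace_coe
    have hUcontr : ∀ y : H, ‖U y‖ ≤ ‖y‖ := by
      intro y
      set K := LinearMap.ker (U : H →ₗ[ℂ] H) with hK
      have hdec : (Submodule.orthogonalProjectionOnto K y : H) + (Submodule.orthogonalProjectionOnto Kᗮ y : H) = y :=
          K.starProjection_add_starProjection_orthogonal y
      have hky : U y = U ((Submodule.orthogonalProjectionOnto Kᗮ y : H)) := by
        conv_lhs => rw [← hdec]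
        rw [map_add]
        have h0 : U ((Submodule.orthogonalProjectionOnto K y : H)) = 0 :=
          LinearMap.mem_ker.mp (SetLike.coe_mem (Submodule.orthogonalProjectionOnto K y))
        rw [h0, zero_add]
      rw [hky, hU _ (SetLike.coe_mem (Submodule.orthogonalProjectionOnto Kᗮ y))]
      calc ‖(Submodule.orthogonalProjectionOnto Kᗮ y : H)‖ ≤ ‖Submodule.orthogonalProjectionOnto Kᗮ‖ * ‖y‖ :=
            (Submodule.orthogonalProjectionOnto Kᗮ).le_opNorm y
        _ ≤ 1 * ‖y‖ := by
            have := Submodule.orthogonalProjectionOnto_norm_le Kᗮ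
            exact mul_le_mul_of_nonneg_right this (norm_nonneg y)
        _ = ‖y‖ := one_mul _
    have hUnorm : ‖U‖ ≤ 1 :=
      ContinuousLinearMap.opNorm_le_bound U zero_le_one fun y => by
        rw [one_mul]; exact hUcontr y
    have hUadj : ∀ y, ‖ContinuousLinearMap.adjoint U y‖ ≤ ‖y‖ := by
      intro y
      have hn : ‖ContinuousLinearMap.adjoint U‖ = ‖U‖ :=
        LinearIsometryEquiv.norm_map ContinuousLinearMap.adjoint U
      calc ‖ContinuousLinearMap.adjoint U y‖
          ≤ ‖ContinuousLinearMap.adjoint U‖ * ‖y‖ :=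
            (ContinuousLinearMap.adjoint U).le_opNorm y
        _ ≤ 1 * ‖y‖ := by
            rw [hn]
            exact mul_le_mul_of_nonneg_right hUnorm (norm_nonneg y)
        _ = ‖y‖ := one_mul _
    have hfU : ∀ x, ContinuousLinearMap.adjoint A x
        = ContinuousLinearMap.adjoint U (ContinuousLinearMap.adjoint A' x) := by
      intro x
      rw [hAU, ContinuousLinearMap.adjoint_comp]
      rfl
    set T : H →L[ℂ] H := A' ∘L ContinuousLinearMap.adjoint A'
      - A ∘L ContinuousLinearMap.adjoint A with hT
    have hTin : ∀ x y : H, (inner ℂ (T x) y : ℂ)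
        = inner ℂ (ContinuousLinearMap.adjoint A' x) (ContinuousLinearMap.adjoint A' y)
          - inner ℂ (ContinuousLinearMap.adjoint A x) (ContinuousLinearMap.adjoint A y) := by
      intro x y
      simp only [hT, ContinuousLinearMap.sub_apply, ContinuousLinearMap.comp_apply,
        inner_sub_left]
      rw [← ContinuousLinearMap.adjoint_inner_right A' (ContinuousLinearMap.adjoint A' x) y,
        ← ContinuousLinearMap.adjoint_inner_right A (ContinuousLinearMap.adjoint A x) y]
    have hsym : ∀ x y : H, (inner ℂ (T x) y : ℂ) = inner ℂ x (T y) := by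
      intro x y
      rw [hTin x y]
      simp only [hT, ContinuousLinearMap.sub_apply, ContinuousLinearMap.comp_apply,
        inner_sub_right]
      rw [← ContinuousLinearMap.adjoint_inner_left A' (ContinuousLinearMap.adjoint A' y) x,
        ← ContinuousLinearMap.adjoint_inner_left A (ContinuousLinearMap.adjoint A y) x]
    have hTre : ∀ x : H, ((inner ℂ (T x) x : ℂ)).re
        = ‖ContinuousLinearMap.adjoint A' x‖ ^ 2 - ‖ContinuousLinearMap.adjoint A x‖ ^ 2 := by
      intro x
      rw [hTin x x, Complex.sub_re, re_inner_self, re_inner_self]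
    have hpos : ∀ x : H, 0 ≤ ((inner ℂ (T x) x : ℂ)).re := by
      intro x
      rw [hTre x]
      have h1 : ‖ContinuousLinearMap.adjoint A x‖ ≤ ‖ContinuousLinearMap.adjoint A' x‖ := by
        rw [hfU x]; exact hUadj _
      have := pow_le_pow_left₀ (norm_nonneg _) h1 2
      linarith
    have t1 := trace_adjoint b A lam hA2 hlsum hsum
    have t2 := trace_adjoint b A' lam' hA'2 hlsum' hsum'
    set d : ℕ → ℝ := fun j => ‖ContinuousLinearMap.adjoint A' (b j)‖ ^ 2
      - ‖ContinuousLinearMap.adjoint A (b j)‖ ^ 2 with hd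
    have hdsummable : Summable d := t2.1.sub t1.1
    have hdsum : ∑' j, d j = 0 := by
      rw [hd, t2.1.tsum_sub t1.1, t2.2, t1.2, sub_self]
    have hdzero : ∀ j, ((inner ℂ (T (b j)) (b j) : ℂ)).re = 0 := by
      intro j
      have hnn : ∀ i, 0 ≤ d i := fun i => by
        have := hpos (b i); rwa [hTre (b i)] at this
      have hle : d j ≤ ∑' i, d i := hdsummable.le_tsum j fun i _ => hnn i
      rw [hdsum] at hle
      rw [hTre (b j)]
      exact le_antisymm hle (hnn j)
    have hTbj : ∀ j, T (b j) = 0 := fun j => posop hsym hpos (hdzero j)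
    have hTeq : A' ∘L ContinuousLinearMap.adjoint A' = A ∘L ContinuousLinearMap.adjoint A := by
      refine ext_of_basis b fun j => ?_
      have := hTbj j
      rw [hT, ContinuousLinearMap.sub_apply] at this
      exact sub_eq_zero.mp this
    intro x
    rw [← rho_apply b lam ψ hlam A hA x, ← rho_apply b lam' ψ' hlam' A' hA' x]
    exact (ContinuousLinearMap.ext_iff.mp hTeq x).symm
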